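/- Let g > 0, α > 0, β > 0, 0 < γ < 1, and c < 0 with c ≤ 4g²/(γ − 1). Set ω := √(4αg), r² := x² + y², z_b(x,y) := α r²/2, f(ζ) := −4g/β² + (2/β²)√( 4g² + c ζ + β² α g (γ² − 1) ζ² ), h(t,x,y) := max{ 0, (1/r²) f( r²/(γ cos(ωt) − 1) ) }, u(t,x,y,z) := x ( β (z − z_b − h/2) + ω γ sin(ωt)/(2(1 − γ cos(ωt))) ), v(t,x,y,z) := y ( β (z − z_b − h/2) + ω γ sin(ωt)/(2(1 − γ cos(ωt))) ), and w(t,x,y,z) := − ∂_x ∫_{z_b}^z u dz' − ∂_y ∫_{z_b}^z v dz'. Then at every (t,x,y) with r > 0, f( r²/(γ cos(ωt) − 1) ) > 0 and 4g² + c ζ + β² α g (γ² − 1) ζ² > 0 for ζ = r²/(γ cos(ωt) − 1), the following hold for z_b(x,y) ≤ z ≤ z_b(x,y) + h(t,x,y): (i) ∂_x u + ∂_y v + ∂_z w = 0; (ii) ∂_t u + u ∂_x u + v ∂_y u + w ∂_z u + g ∂_x (h + z_b) = 0 and ∂_t v + u ∂_x v + v ∂_y v + w ∂_z v + g ∂_y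 (h + z_b) = 0; (iii) the kinematic free-surface condition ∂_t(h + z_b) + u ∂_x (h + z_b) + v ∂_y (h + z_b) − w = 0 holds at z = z_b + h, and the bottom impermeability condition w = u ∂_x z_b + v ∂_y z_b holds at z = z_b. -/

import Mathlib

open MeasureTheory Real

set_option maxHeartbeats 1600000

private lemma hid (x : ℝ) : HasDerivAt (fun s : ℝ => s) 1 x := hasDerivAt_id x

private lemma hcv {f : ℝ → ℝ} {v v' x : ℝ} (h : HasDerivAt f v' x) (hv : v = v') :
    HasDerivAt f v x := hv ▸ h

private lemma integ_lin (m b a z : ℝ) :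
    (∫ ζ in a..z, (m * ζ + b)) = m * ((z ^ 2 - a ^ 2) / 2) + b * (z - a) := by
  have h1 : IntervalIntegrable (fun ζ : ℝ => m * ζ) MeasureTheory.volume a z :=
    (continuous_const.mul continuous_id).intervalIntegrable a z
  rw [intervalIntegral.integral_add h1 intervalIntegrable_const,
    intervalIntegral.integral_const_mul, integral_id, intervalIntegral.integral_const,
    smul_eq_mul]
  ring

set_option maxHeartbeats 1000000 in
private lemma keylem (g α β γ c ω R C S q : ℝ) (hβ : β ≠ 0) (hR : R ≠ 0)
    (hD : γ * C - 1 ≠ 0) (h1γ : (1:ℝ) - γ * C ≠ 0) (hq : q ≠ 0)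
    (hq2 : q ^ 2 = 4 * g ^ 2 + c * (R / (γ * C - 1))
      + β ^ 2 * α * g * (γ ^ 2 - 1) * (R / (γ * C - 1)) ^ 2)
    (hS2 : S ^ 2 = 1 - C ^ 2) (hω2 : ω ^ 2 = 4 * α * g) :
    (ω * γ * S / (2 * (1 - γ * C)) - β * (((2 * q - 4 * g) / β ^ 2) / R) / 2) ^ 2
      - β * R * (((c + 2 * (β ^ 2 * α * g * (γ ^ 2 - 1)) * (R / (γ * C - 1))) / (β ^ 2 * q)) / ((γ * C - 1) * R) - ((2 * q - 4 * g) / β ^ 2) / R ^ 2) * (ω * γ * S / (2 * (1 - γ * C)) - β * (((2 * q - 4 * g) / β ^ 2) / R) / 2)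
      + (2 * α * g * γ * (C - γ) / (γ * C - 1) ^ 2 - β * (((c + 2 * (β ^ 2 * α * g * (γ ^ 2 - 1)) * (R / (γ * C - 1))) / (β ^ 2 * q)) * γ * ω * S / (γ * C - 1) ^ 2) / 2) + g * (2 * (((c + 2 * (β ^ 2 * α * g * (γ ^ 2 - 1)) * (R / (γ * C - 1))) / (β ^ 2 * q)) / ((γ * C - 1) * R) - ((2 * q - 4 * g) / β ^ 2) / R ^ 2) + α) = 0 := by
  have hq2' : q ^ 2 * (γ * C - 1) ^ 2 = 4 * g ^ 2 * (γ * C - 1) ^ 2 + c * R * (γ * C - 1)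
      + β ^ 2 * α * g * (γ ^ 2 - 1) * R ^ 2 := by
    rw [hq2]
    field_simp
  field_simp
  rw [mul_zero]
  linear_combination (- 4 * q * (γ * C - 1) * C ^ 2 * γ ^ 2 + 8 * q * (γ * C - 1) * C * γ - 4 * q * (γ * C - 1)) * hq2' + (4 * q * (γ * C - 1) ^ 3 * g * α * β ^ 2 * γ ^ 2 * R ^ 2) * hS2 + (q * S ^ 2 * (γ * C - 1) ^ 3 * β ^ 2 * γ ^ 2 * R ^ 2) * hω2

private lemma keylem2 (β γ ω R S C fd fz : ℝ) (hR : R ≠ 0) (hD : γ * C - 1 ≠ 0)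
    (h1γ : (1:ℝ) - γ * C ≠ 0) :
    fd * γ * ω * S / (γ * C - 1) ^ 2
      + 2 * (ω * γ * S / (2 * (1 - γ * C))) * (R * (fd / ((γ * C - 1) * R) - fz / R ^ 2) + fz / R) = 0 := by
  field_simp
  ring

/-- the radially-symmetrical parabolic-bowl solution is an
analytical solution of the 3d incompressible hydrostatic Euler system. -/
theorem stmt13 (g α β γ c : ℝ) (hg : 0 < g) (hα : 0 < α) (hβ : 0 < β)
    (hγ0 : 0 < γ) (hγ1 : γ < 1) (hc : c < 0) (hc' : c ≤ 4 * g ^ 2 / (γ - 1))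
    (ω : ℝ) (hω : ω = Real.sqrt (4 * α * g))
    (zb : ℝ → ℝ → ℝ) (hzb : ∀ x y, zb x y = α * (x ^ 2 + y ^ 2) / 2)
    (f : ℝ → ℝ)
    (hf : ∀ ζ, f ζ = -(4 * g) / β ^ 2
      + (2 / β ^ 2) * Real.sqrt (4 * g ^ 2 + c * ζ + β ^ 2 * α * g * (γ ^ 2 - 1) * ζ ^ 2))
    (h : ℝ → ℝ → ℝ → ℝ)
    (hh : ∀ t x y, h t x y
      = max 0 ((1 / (x ^ 2 + y ^ 2)) * f ((x ^ 2 + y ^ 2) / (γ * Real.cos (ω * t) - 1))))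
    (u v : ℝ → ℝ → ℝ → ℝ → ℝ)
    (hu : ∀ t x y z, u t x y z
      = x * (β * (z - zb x y - h t x y / 2)
        + ω * γ * Real.sin (ω * t) / (2 * (1 - γ * Real.cos (ω * t)))))
    (hv : ∀ t x y z, v t x y z
      = y * (β * (z - zb x y - h t x y / 2)
        + ω * γ * Real.sin (ω * t) / (2 * (1 - γ * Real.cos (ω * t)))))
    (w : ℝ → ℝ → ℝ → ℝ → ℝ)
    (hw : ∀ t x y z, w t x y z
      = -deriv (fun s => ∫ ζ in (zb s y)..z, u t s y ζ) x
        - deriv (fun s => ∫ ζ in (zb x s)..z, v t x s ζ) y)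
    (t x y : ℝ) (hr : 0 < x ^ 2 + y ^ 2)
    (hfpos : 0 < f ((x ^ 2 + y ^ 2) / (γ * Real.cos (ω * t) - 1)))
    (hdisc : 0 < 4 * g ^ 2 + c * ((x ^ 2 + y ^ 2) / (γ * Real.cos (ω * t) - 1))
      + β ^ 2 * α * g * (γ ^ 2 - 1) * ((x ^ 2 + y ^ 2) / (γ * Real.cos (ω * t) - 1)) ^ 2) :
    (∀ z, zb x y ≤ z → z ≤ zb x y + h t x y →
      -- (i) incompressibility
      (deriv (fun s => u t s y z) x + deriv (fun s => v t x s z) y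
        + deriv (fun s => w t x y s) z = 0) ∧
      -- (ii) horizontal momentum equations
      (deriv (fun s => u s x y z) t + u t x y z * deriv (fun s => u t s y z) x
        + v t x y z * deriv (fun s => u t x s z) y + w t x y z * deriv (fun s => u t x y s) z
        + g * deriv (fun s => h t s y + zb s y) x = 0) ∧
      (deriv (fun s => v s x y z) t + u t x y z * deriv (fun s => v t s y z) x
        + v t x y z * deriv (fun s => v t x s z) y + w t x y z * deriv (fun s => v t x y s) z
        + g * deriv (fun s => h t x s + zb x s) y = 0)) ∧
    -- (iii) kinematic free-surface condition
    (deriv (fun s => h s x y + zb x y) t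
      + u t x y (zb x y + h t x y) * deriv (fun s => h t s y + zb s y) x
      + v t x y (zb x y + h t x y) * deriv (fun s => h t x s + zb x s) y
      - w t x y (zb x y + h t x y) = 0) ∧
    -- (iii) bottom impermeability condition
    (w t x y (zb x y)
      = u t x y (zb x y) * deriv (fun s => zb s y) x
        + v t x y (zb x y) * deriv (fun s => zb x s) y) := by

  set Cv := Real.cos (ω * t) with hCv
  set Sv := Real.sin (ω * t) with hSv
  set Rv := x ^ 2 + y ^ 2 with hRv
  set Dv := γ * Cv - 1 with hDv
  set Zv := Rv / Dv with hZv
  set qv := Real.sqrt (4 * g ^ 2 + c * Zv + β ^ 2 * α * g * (γ ^ 2 - 1) * Zv ^ 2) with hqv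
  set fz := (2 * qv - 4 * g) / β ^ 2 with hfz
  set fd := (c + 2 * (β ^ 2 * α * g * (γ ^ 2 - 1)) * Zv) / (β ^ 2 * qv) with hfd
  set Kv := ω * γ * Sv / (2 * (1 - γ * Cv)) with hKv
  set Kd := 2 * α * g * γ * (Cv - γ) / Dv ^ 2 with hKd
  set hv1 := fz / Rv with hhv1
  set hRR := fd / (Dv * Rv) - fz / Rv ^ 2 with hhRR
  set hT1 := fd * γ * ω * Sv / Dv ^ 2 with hhT1
  set zbv := α * Rv / 2 with hzbv
  clear_value Cv Sv Rv Dv Zv qv fz fd Kv Kd hv1 hRR hT1 zbv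
  -- basic facts
  have hβne : β ≠ 0 := ne_of_gt hβ
  have hω2 : ω ^ 2 = 4 * α * g := by rw [hω, sq_sqrt (by positivity)]
  have hSC : Sv ^ 2 + Cv ^ 2 = 1 := by rw [hSv, hCv]; exact Real.sin_sq_add_cos_sq (ω * t)
  have hS2 : Sv ^ 2 = 1 - Cv ^ 2 := by linarith
  have hDneg : ∀ s : ℝ, γ * Real.cos s - 1 < 0 := by
    intro s
    nlinarith [Real.cos_le_one s, Real.neg_one_le_cos s]
  have hD : Dv < 0 := by rw [hDv, hCv]; exact hDneg (ω * t)
  have hDne : Dv ≠ 0 := ne_of_lt hD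
  have hD2ne : γ * Cv - 1 ≠ 0 := by rw [← hDv]; exact hDne
  have h1γ : (0:ℝ) < 1 - γ * Cv := by
    have := hD
    rw [hDv] at this
    linarith
  have h1γne : (1:ℝ) - γ * Cv ≠ 0 := ne_of_gt h1γ
  have hRpos : (0:ℝ) < Rv := hr
  have hRne : Rv ≠ 0 := ne_of_gt hRpos
  have hRne' : x ^ 2 + y ^ 2 ≠ 0 := by rw [← hRv]; exact hRne
  have hQpos : (0:ℝ) < 4 * g ^ 2 + c * Zv + β ^ 2 * α * g * (γ ^ 2 - 1) * Zv ^ 2 := hdisc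
  have hqpos : (0:ℝ) < qv := by rw [hqv]; exact Real.sqrt_pos.mpr hQpos
  have hqne : qv ≠ 0 := ne_of_gt hqpos
  have hq2 : qv ^ 2 = 4 * g ^ 2 + c * Zv + β ^ 2 * α * g * (γ ^ 2 - 1) * Zv ^ 2 := by
    rw [hqv]; exact Real.sq_sqrt hQpos.le
  have hfe : f = (fun ζ : ℝ => -(4 * g) / β ^ 2
      + (2 / β ^ 2) * Real.sqrt (4 * g ^ 2 + c * ζ + β ^ 2 * α * g * (γ ^ 2 - 1) * ζ ^ 2)) :=
    funext hf
  have hfval : f Zv = fz := by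
    rw [hf Zv, ← hqv, hfz]
    field_simp
    ring
  have hfzpos : 0 < fz := by rw [← hfval]; exact hfpos
  have hfcont : Continuous f := by rw [hfe]; fun_prop
  -- derivative of f
  have HQd : HasDerivAt (fun ζ : ℝ => 4 * g ^ 2 + c * ζ + β ^ 2 * α * g * (γ ^ 2 - 1) * ζ ^ 2)
      (c + 2 * (β ^ 2 * α * g * (γ ^ 2 - 1)) * Zv) Zv :=
    hcv (((hasDerivAt_const _ _).add ((hid Zv).const_mul c)).add
      (((hid Zv).pow 2).const_mul (β ^ 2 * α * g * (γ ^ 2 - 1)))) (by push_cast; ring)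
  have Hf : HasDerivAt f fd Zv := by
    rw [hfe]
    have h3 : HasDerivAt Real.sqrt
        (1 / (2 * Real.sqrt (4 * g ^ 2 + c * Zv + β ^ 2 * α * g * (γ ^ 2 - 1) * Zv ^ 2)))
        (4 * g ^ 2 + c * Zv + β ^ 2 * α * g * (γ ^ 2 - 1) * Zv ^ 2) :=
      Real.hasDerivAt_sqrt (ne_of_gt hQpos)
    refine hcv (((h3.comp Zv HQd).const_mul ((2:ℝ) / β ^ 2)).const_add (-(4 * g) / β ^ 2)) ?_
    rw [← hqv, hfd]
    field_simp


  -- x slice of h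
  have heqx : (fun s => h t s y) =ᶠ[nhds x] (fun s => 1 / (s ^ 2 + y ^ 2) * f ((s ^ 2 + y ^ 2) / Dv)) := by
    have hcont : ContinuousAt (fun s => 1 / (s ^ 2 + y ^ 2) * f ((s ^ 2 + y ^ 2) / Dv)) x := by
      apply ContinuousAt.mul
      · exact ContinuousAt.div continuousAt_const (by fun_prop) hRne'
      · exact hfcont.continuousAt.comp (ContinuousAt.div (by fun_prop) continuousAt_const hDne)
    have hpos : (0:ℝ) < (fun s => 1 / (s ^ 2 + y ^ 2) * f ((s ^ 2 + y ^ 2) / Dv)) x := by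
      show (0:ℝ) < 1 / (x ^ 2 + y ^ 2) * f ((x ^ 2 + y ^ 2) / Dv)
      rw [← hRv, ← hZv]
      exact mul_pos (one_div_pos.mpr hRpos) hfpos
    filter_upwards [hcont.eventually (eventually_gt_nhds hpos)] with s hs
    rw [hh t s y, ← hCv, ← hDv]
    exact max_eq_right hs.le
  have Hr2x : HasDerivAt (fun s : ℝ => s ^ 2 + y ^ 2) (2 * x) x :=
    hcv (((hid x).pow 2).add_const (y ^ 2)) (by push_cast; ring)
  have HfZ' : HasDerivAt f fd ((x ^ 2 + y ^ 2) / Dv) := by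
    rw [← hRv, ← hZv]; exact Hf
  have Hfx : HasDerivAt (fun s => f ((s ^ 2 + y ^ 2) / Dv)) (fd * (2 * x / Dv)) x :=
    hcv (HfZ'.comp x (Hr2x.div_const Dv)) (by ring)
  have Hinvx : HasDerivAt (fun s : ℝ => 1 / (s ^ 2 + y ^ 2)) (-(2 * x) / Rv ^ 2) x :=
    hcv ((hasDerivAt_const x (1:ℝ)).div Hr2x hRne') (by rw [← hRv]; ring)
  have Hphix : HasDerivAt (fun s => 1 / (s ^ 2 + y ^ 2) * f ((s ^ 2 + y ^ 2) / Dv)) (2 * x * hRR) x := by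
    refine hcv (Hinvx.mul Hfx) ?_
    show 2 * x * hRR = -(2 * x) / Rv ^ 2 * f ((x ^ 2 + y ^ 2) / Dv) + 1 / (x ^ 2 + y ^ 2) * (fd * (2 * x / Dv))
    rw [← hRv, ← hZv, hfval, hhRR]
    field_simp
    ring
  have Hhx : HasDerivAt (fun s => h t s y) (2 * x * hRR) x :=
    Hphix.congr_of_eventuallyEq heqx
  -- y slice of h
  have heqy : (fun s => h t x s) =ᶠ[nhds y] (fun s => 1 / (x ^ 2 + s ^ 2) * f ((x ^ 2 + s ^ 2) / Dv)) := by
    have hcont : ContinuousAt (fun s => 1 / (x ^ 2 + s ^ 2) * f ((x ^ 2 + s ^ 2) / Dv)) y := by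
      apply ContinuousAt.mul
      · exact ContinuousAt.div continuousAt_const (by fun_prop) hRne'
      · exact hfcont.continuousAt.comp (ContinuousAt.div (by fun_prop) continuousAt_const hDne)
    have hpos : (0:ℝ) < (fun s => 1 / (x ^ 2 + s ^ 2) * f ((x ^ 2 + s ^ 2) / Dv)) y := by
      show (0:ℝ) < 1 / (x ^ 2 + y ^ 2) * f ((x ^ 2 + y ^ 2) / Dv)
      rw [← hRv, ← hZv]
      exact mul_pos (one_div_pos.mpr hRpos) hfpos
    filter_upwards [hcont.eventually (eventually_gt_nhds hpos)] with s hs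
    rw [hh t x s, ← hCv, ← hDv]
    exact max_eq_right hs.le
  have Hr2y : HasDerivAt (fun s : ℝ => x ^ 2 + s ^ 2) (2 * y) y :=
    hcv (((hid y).pow 2).const_add (x ^ 2)) (by push_cast; ring)
  have Hfy : HasDerivAt (fun s => f ((x ^ 2 + s ^ 2) / Dv)) (fd * (2 * y / Dv)) y :=
    hcv (HfZ'.comp y (Hr2y.div_const Dv)) (by ring)
  have Hinvy : HasDerivAt (fun s : ℝ => 1 / (x ^ 2 + s ^ 2)) (-(2 * y) / Rv ^ 2) y :=
    hcv ((hasDerivAt_const y (1:ℝ)).div Hr2y hRne') (by rw [← hRv]; ring)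
  have Hphiy : HasDerivAt (fun s => 1 / (x ^ 2 + s ^ 2) * f ((x ^ 2 + s ^ 2) / Dv)) (2 * y * hRR) y := by
    refine hcv (Hinvy.mul Hfy) ?_
    show 2 * y * hRR = -(2 * y) / Rv ^ 2 * f ((x ^ 2 + y ^ 2) / Dv) + 1 / (x ^ 2 + y ^ 2) * (fd * (2 * y / Dv))
    rw [← hRv, ← hZv, hfval, hhRR]
    field_simp
    ring
  have Hhy : HasDerivAt (fun s => h t x s) (2 * y * hRR) y :=
    Hphiy.congr_of_eventuallyEq heqy
  -- t slice of h
  have heqt : (fun s => h s x y) =ᶠ[nhds t] (fun s => 1 / Rv * f (Rv / (γ * Real.cos (ω * s) - 1))) := by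
    have hcont : ContinuousAt (fun s => 1 / Rv * f (Rv / (γ * Real.cos (ω * s) - 1))) t := by
      apply ContinuousAt.mul continuousAt_const
      apply hfcont.continuousAt.comp
      exact ContinuousAt.div continuousAt_const (by fun_prop) (by rw [← hCv, ← hDv]; exact hDne)
    have hpos : (0:ℝ) < (fun s => 1 / Rv * f (Rv / (γ * Real.cos (ω * s) - 1))) t := by
      show (0:ℝ) < 1 / Rv * f (Rv / (γ * Real.cos (ω * t) - 1))
      rw [← hCv, ← hDv, ← hZv]
      exact mul_pos (one_div_pos.mpr hRpos) hfpos
    filter_upwards [hcont.eventually (eventually_gt_nhds hpos)] with s hs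
    rw [hh s x y, ← hRv]
    exact max_eq_right hs.le
  have hω1 : HasDerivAt (fun s : ℝ => ω * s) ω t := hcv ((hid t).const_mul ω) (by ring)
  have Hcos : HasDerivAt (fun s : ℝ => γ * Real.cos (ω * s) - 1) (-(γ * ω * Sv)) t :=
    hcv ((((Real.hasDerivAt_cos (ω * t)).comp t hω1).const_mul γ).sub_const 1)
      (by rw [hSv]; ring)
  have Hzt : HasDerivAt (fun s => Rv / (γ * Real.cos (ω * s) - 1)) (Rv * γ * ω * Sv / Dv ^ 2) t := by
    refine hcv ((hasDerivAt_const t Rv).div Hcos (by rw [← hCv, ← hDv]; exact hDne)) ?_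
    rw [← hCv, ← hDv]
    ring
  have HfZ2 : HasDerivAt f fd (Rv / (γ * Real.cos (ω * t) - 1)) := by
    rw [← hCv, ← hDv, ← hZv]; exact Hf
  have Hphit : HasDerivAt (fun s => 1 / Rv * f (Rv / (γ * Real.cos (ω * s) - 1))) hT1 t := by
    refine hcv ((HfZ2.comp t Hzt).const_mul (1 / Rv)) ?_
    rw [hhT1]
    field_simp
  have Hht : HasDerivAt (fun s => h s x y) hT1 t :=
    Hphit.congr_of_eventuallyEq heqt
  -- derivative of the oscillation term
  have HK : HasDerivAt (fun s => ω * γ * Real.sin (ω * s) / (2 * (1 - γ * Real.cos (ω * s)))) Kd t := by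
    have hnum : HasDerivAt (fun s : ℝ => ω * γ * Real.sin (ω * s)) (ω * γ * (Real.cos (ω * t) * ω)) t :=
      ((Real.hasDerivAt_sin (ω * t)).comp t hω1).const_mul (ω * γ)
    have hden : HasDerivAt (fun s : ℝ => 2 * (1 - γ * Real.cos (ω * s)))
        (2 * -(γ * (-Real.sin (ω * t) * ω))) t :=
      ((((Real.hasDerivAt_cos (ω * t)).comp t hω1).const_mul γ).const_sub 1).const_mul 2
    have hdenne : 2 * (1 - γ * Real.cos (ω * t)) ≠ 0 := by
      rw [← hCv]
      exact mul_ne_zero two_ne_zero h1γne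
    refine hcv (hnum.div hden hdenne) ?_
    rw [hKd, ← hSv, ← hCv, hDv]
    field_simp
    linear_combination (4 * α * g * γ * (γ * Cv - 1) ^ 2) * hS2 + (-(γ * Cv - 1) ^ 2 * (Cv * (1 - γ * Cv) - γ * Sv ^ 2)) * hω2


  -- values at the point
  have hH : h t x y = hv1 := by
    rw [hh t x y, ← hCv, ← hRv, ← hDv, ← hZv, hfval, hhv1,
      max_eq_right (le_of_lt (mul_pos (one_div_pos.mpr hRpos) hfzpos))]
    ring
  have hUval : ∀ z : ℝ, u t x y z = x * (β * (z - zbv - hv1 / 2) + Kv) := by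
    intro z
    rw [hu, hzb, hH, ← hSv, ← hCv, ← hKv, ← hRv, ← hzbv]
  have hVval : ∀ z : ℝ, v t x y z = y * (β * (z - zbv - hv1 / 2) + Kv) := by
    intro z
    rw [hv, hzb, hH, ← hSv, ← hCv, ← hKv, ← hRv, ← hzbv]
  -- closed form of w
  have hwcf : ∀ z : ℝ, w t x y z = ((-2) * (β * ((z - zbv) ^ 2 / 2 - hv1 / 2 * (z - zbv)) + Kv * (z - zbv)) + Rv * (α * (β * (z - zbv - hv1 / 2) + Kv) + β * hRR * (z - zbv))) := by
    intro z
    have Ha1 : HasDerivAt (fun s : ℝ => α * (s ^ 2 + y ^ 2) / 2) (α * x) x :=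
      hcv ((Hr2x.const_mul α).div_const 2) (by ring)
    have Ha2 : HasDerivAt (fun s : ℝ => α * (x ^ 2 + s ^ 2) / 2) (α * y) y :=
      hcv ((Hr2y.const_mul α).div_const 2) (by ring)
    have hint1 : (fun s => ∫ ζ in (zb s y)..z, u t s y ζ)
        = fun s => (s * β) * ((z ^ 2 - (α * (s ^ 2 + y ^ 2) / 2) ^ 2) / 2)
          + (s * (Kv - β * (α * (s ^ 2 + y ^ 2) / 2 + h t s y / 2))) * (z - α * (s ^ 2 + y ^ 2) / 2) := by
      funext s
      have hi : (fun ζ => u t s y ζ)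
          = fun ζ => (s * β) * ζ + s * (Kv - β * (α * (s ^ 2 + y ^ 2) / 2 + h t s y / 2)) := by
        funext ζ
        rw [hu, hzb, ← hSv, ← hCv, ← hKv]
        ring
      rw [hzb, hi, integ_lin]
    have hint2 : (fun s => ∫ ζ in (zb x s)..z, v t x s ζ)
        = fun s => (s * β) * ((z ^ 2 - (α * (x ^ 2 + s ^ 2) / 2) ^ 2) / 2)
          + (s * (Kv - β * (α * (x ^ 2 + s ^ 2) / 2 + h t x s / 2))) * (z - α * (x ^ 2 + s ^ 2) / 2) := by
      funext s
      have hi : (fun ζ => v t x s ζ)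
          = fun ζ => (s * β) * ζ + s * (Kv - β * (α * (x ^ 2 + s ^ 2) / 2 + h t x s / 2)) := by
        funext ζ
        rw [hv, hzb, ← hSv, ← hCv, ← hKv]
        ring
      rw [hzb, hi, integ_lin]
    have he1 : (fun s => (s * β) * ((z ^ 2 - (α * (s ^ 2 + y ^ 2) / 2) ^ 2) / 2)
          + (s * (Kv - β * (α * (s ^ 2 + y ^ 2) / 2 + h t s y / 2))) * (z - α * (s ^ 2 + y ^ 2) / 2))
        =ᶠ[nhds x] (fun s => (s * β) * ((z ^ 2 - (α * (s ^ 2 + y ^ 2) / 2) ^ 2) / 2)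
          + (s * (Kv - β * (α * (s ^ 2 + y ^ 2) / 2 + (fun s => 1 / (s ^ 2 + y ^ 2) * f ((s ^ 2 + y ^ 2) / Dv)) s / 2))) * (z - α * (s ^ 2 + y ^ 2) / 2)) := by
      filter_upwards [heqx] with s hs
      rw [hs]
    have he2 : (fun s => (s * β) * ((z ^ 2 - (α * (x ^ 2 + s ^ 2) / 2) ^ 2) / 2)
          + (s * (Kv - β * (α * (x ^ 2 + s ^ 2) / 2 + h t x s / 2))) * (z - α * (x ^ 2 + s ^ 2) / 2))
        =ᶠ[nhds y] (fun s => (s * β) * ((z ^ 2 - (α * (x ^ 2 + s ^ 2) / 2) ^ 2) / 2)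
          + (s * (Kv - β * (α * (x ^ 2 + s ^ 2) / 2 + (fun s => 1 / (x ^ 2 + s ^ 2) * f ((x ^ 2 + s ^ 2) / Dv)) s / 2))) * (z - α * (x ^ 2 + s ^ 2) / 2)) := by
      filter_upwards [heqy] with s hs
      rw [hs]
    have HD1 : HasDerivAt (fun s => (s * β) * ((z ^ 2 - (α * (s ^ 2 + y ^ 2) / 2) ^ 2) / 2)
          + (s * (Kv - β * (α * (s ^ 2 + y ^ 2) / 2 + (fun s => 1 / (s ^ 2 + y ^ 2) * f ((s ^ 2 + y ^ 2) / Dv)) s / 2))) * (z - α * (s ^ 2 + y ^ 2) / 2))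
        (β * ((z ^ 2 - zbv ^ 2) / 2) - α * β * x ^ 2 * zbv
          + (Kv - β * (zbv + hv1 / 2)) * (z - zbv) - β * x ^ 2 * (α + hRR) * (z - zbv)
          - α * x ^ 2 * (Kv - β * (zbv + hv1 / 2))) x := by
      have hb0 : HasDerivAt (fun s : ℝ => Kv - β * (α * (s ^ 2 + y ^ 2) / 2 + (fun s => 1 / (s ^ 2 + y ^ 2) * f ((s ^ 2 + y ^ 2) / Dv)) s / 2))
          (-(β * (α * x + 2 * x * hRR / 2))) x :=
        ((Ha1.add (Hphix.div_const 2)).const_mul β).const_sub Kv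
      refine hcv ((((hid x).mul_const β).mul (((Ha1.pow 2).const_sub (z ^ 2)).div_const 2)).add
        (((hid x).mul hb0).mul (Ha1.const_sub z))) ?_
      have hx0 : (fun s => 1 / (s ^ 2 + y ^ 2) * f ((s ^ 2 + y ^ 2) / Dv)) x = hv1 := by
        show 1 / (x ^ 2 + y ^ 2) * f ((x ^ 2 + y ^ 2) / Dv) = hv1
        rw [← hRv, ← hZv, hfval, hhv1]
        ring
      rw [hx0, ← hRv, ← hzbv]
      push_cast
      simp only [Pi.mul_apply, Pi.pow_apply, Pi.add_apply, Pi.sub_apply, ← hRv, ← hZv, hfval, hhv1, hzbv]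
      ring
    have HD2 : HasDerivAt (fun s => (s * β) * ((z ^ 2 - (α * (x ^ 2 + s ^ 2) / 2) ^ 2) / 2)
          + (s * (Kv - β * (α * (x ^ 2 + s ^ 2) / 2 + (fun s => 1 / (x ^ 2 + s ^ 2) * f ((x ^ 2 + s ^ 2) / Dv)) s / 2))) * (z - α * (x ^ 2 + s ^ 2) / 2))
        (β * ((z ^ 2 - zbv ^ 2) / 2) - α * β * y ^ 2 * zbv
          + (Kv - β * (zbv + hv1 / 2)) * (z - zbv) - β * y ^ 2 * (α + hRR) * (z - zbv)
          - α * y ^ 2 * (Kv - β * (zbv + hv1 / 2))) y := by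
      have hb0 : HasDerivAt (fun s : ℝ => Kv - β * (α * (x ^ 2 + s ^ 2) / 2 + (fun s => 1 / (x ^ 2 + s ^ 2) * f ((x ^ 2 + s ^ 2) / Dv)) s / 2))
          (-(β * (α * y + 2 * y * hRR / 2))) y :=
        ((Ha2.add (Hphiy.div_const 2)).const_mul β).const_sub Kv
      refine hcv ((((hid y).mul_const β).mul (((Ha2.pow 2).const_sub (z ^ 2)).div_const 2)).add
        (((hid y).mul hb0).mul (Ha2.const_sub z))) ?_
      have hy0 : (fun s => 1 / (x ^ 2 + s ^ 2) * f ((x ^ 2 + s ^ 2) / Dv)) y = hv1 := by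
        show 1 / (x ^ 2 + y ^ 2) * f ((x ^ 2 + y ^ 2) / Dv) = hv1
        rw [← hRv, ← hZv, hfval, hhv1]
        ring
      rw [hy0, ← hRv, ← hzbv]
      push_cast
      simp only [Pi.mul_apply, Pi.pow_apply, Pi.add_apply, Pi.sub_apply, ← hRv, ← hZv, hfval, hhv1, hzbv]
      ring
    rw [hw, hint1, hint2, he1.deriv_eq, he2.deriv_eq, HD1.deriv, HD2.deriv, hRv]
    ring


  -- derivatives of u and v
  have Ha1 : HasDerivAt (fun s : ℝ => α * (s ^ 2 + y ^ 2) / 2) (α * x) x :=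
    hcv ((Hr2x.const_mul α).div_const 2) (by ring)
  have Ha2 : HasDerivAt (fun s : ℝ => α * (x ^ 2 + s ^ 2) / 2) (α * y) y :=
    hcv ((Hr2y.const_mul α).div_const 2) (by ring)
  have Hux : ∀ z : ℝ, HasDerivAt (fun s => u t s y z)
      ((β * (z - zbv - hv1 / 2) + Kv) - β * x ^ 2 * (α + hRR)) x := by
    intro z
    have he : (fun s => u t s y z) =ᶠ[nhds x]
        (fun s => s * (β * (z - α * (s ^ 2 + y ^ 2) / 2 - (fun s => 1 / (s ^ 2 + y ^ 2) * f ((s ^ 2 + y ^ 2) / Dv)) s / 2) + Kv)) := by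
      filter_upwards [heqx] with s hs
      rw [hu, hzb, hs, ← hSv, ← hCv, ← hKv]
    refine (hcv ((hid x).mul ((((Ha1.const_sub z).sub (Hphix.div_const 2)).const_mul β).add
      (hasDerivAt_const x Kv))) ?_).congr_of_eventuallyEq he
    have hx0 : 1 / (x ^ 2 + y ^ 2) * f ((x ^ 2 + y ^ 2) / Dv) = hv1 := by
      rw [← hRv, ← hZv, hfval, hhv1]
      ring
    simp only [Pi.add_apply, Pi.sub_apply, hx0]
    rw [← hRv, ← hzbv]
    ring
  have Hvy : ∀ z : ℝ, HasDerivAt (fun s => v t x s z)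
      ((β * (z - zbv - hv1 / 2) + Kv) - β * y ^ 2 * (α + hRR)) y := by
    intro z
    have he : (fun s => v t x s z) =ᶠ[nhds y]
        (fun s => s * (β * (z - α * (x ^ 2 + s ^ 2) / 2 - (fun s => 1 / (x ^ 2 + s ^ 2) * f ((x ^ 2 + s ^ 2) / Dv)) s / 2) + Kv)) := by
      filter_upwards [heqy] with s hs
      rw [hv, hzb, hs, ← hSv, ← hCv, ← hKv]
    refine (hcv ((hid y).mul ((((Ha2.const_sub z).sub (Hphiy.div_const 2)).const_mul β).add
      (hasDerivAt_const y Kv))) ?_).congr_of_eventuallyEq he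
    have hy0 : 1 / (x ^ 2 + y ^ 2) * f ((x ^ 2 + y ^ 2) / Dv) = hv1 := by
      rw [← hRv, ← hZv, hfval, hhv1]
      ring
    simp only [Pi.add_apply, Pi.sub_apply, hy0]
    rw [← hRv, ← hzbv]
    ring
  have Huy : ∀ z : ℝ, HasDerivAt (fun s => u t x s z) (-(β * x * y * (α + hRR))) y := by
    intro z
    have he : (fun s => u t x s z) =ᶠ[nhds y]
        (fun s => x * (β * (z - α * (x ^ 2 + s ^ 2) / 2 - (fun s => 1 / (x ^ 2 + s ^ 2) * f ((x ^ 2 + s ^ 2) / Dv)) s / 2) + Kv)) := by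
      filter_upwards [heqy] with s hs
      rw [hu, hzb, hs, ← hSv, ← hCv, ← hKv]
    refine (hcv (((((Ha2.const_sub z).sub (Hphiy.div_const 2)).const_mul β).add
      (hasDerivAt_const y Kv)).const_mul x) ?_).congr_of_eventuallyEq he
    ring
  have Hvx : ∀ z : ℝ, HasDerivAt (fun s => v t s y z) (-(β * x * y * (α + hRR))) x := by
    intro z
    have he : (fun s => v t s y z) =ᶠ[nhds x]
        (fun s => y * (β * (z - α * (s ^ 2 + y ^ 2) / 2 - (fun s => 1 / (s ^ 2 + y ^ 2) * f ((s ^ 2 + y ^ 2) / Dv)) s / 2) + Kv)) := by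
      filter_upwards [heqx] with s hs
      rw [hv, hzb, hs, ← hSv, ← hCv, ← hKv]
    refine (hcv (((((Ha1.const_sub z).sub (Hphix.div_const 2)).const_mul β).add
      (hasDerivAt_const x Kv)).const_mul y) ?_).congr_of_eventuallyEq he
    ring
  have Hut : ∀ z : ℝ, HasDerivAt (fun s => u s x y z) (x * (Kd - β * hT1 / 2)) t := by
    intro z
    have he : (fun s => u s x y z) =ᶠ[nhds t]
        (fun s => x * (β * (z - zb x y - (fun s => 1 / Rv * f (Rv / (γ * Real.cos (ω * s) - 1))) s / 2)
          + ω * γ * Real.sin (ω * s) / (2 * (1 - γ * Real.cos (ω * s))))) := by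
      filter_upwards [heqt] with s hs
      rw [hu, hs]
    refine (hcv (((((Hphit.div_const 2).const_sub (z - zb x y)).const_mul β).add HK).const_mul x)
      ?_).congr_of_eventuallyEq he
    ring
  have Hvt : ∀ z : ℝ, HasDerivAt (fun s => v s x y z) (y * (Kd - β * hT1 / 2)) t := by
    intro z
    have he : (fun s => v s x y z) =ᶠ[nhds t]
        (fun s => y * (β * (z - zb x y - (fun s => 1 / Rv * f (Rv / (γ * Real.cos (ω * s) - 1))) s / 2)
          + ω * γ * Real.sin (ω * s) / (2 * (1 - γ * Real.cos (ω * s))))) := by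
      filter_upwards [heqt] with s hs
      rw [hv, hs]
    refine (hcv (((((Hphit.div_const 2).const_sub (z - zb x y)).const_mul β).add HK).const_mul y)
      ?_).congr_of_eventuallyEq he
    ring
  have Huz : ∀ z : ℝ, HasDerivAt (fun s => u t x y s) (x * β) z := by
    intro z
    have he : (fun s => u t x y s) = fun s => x * (β * (s - zb x y - h t x y / 2) + Kv) := by
      funext s
      rw [hu, ← hSv, ← hCv, ← hKv]
    rw [he]
    exact hcv (((((hid z).sub_const (zb x y)).sub_const (h t x y / 2)).const_mul β).add
      (hasDerivAt_const z Kv) |>.const_mul x) (by ring)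
  have Hvz : ∀ z : ℝ, HasDerivAt (fun s => v t x y s) (y * β) z := by
    intro z
    have he : (fun s => v t x y s) = fun s => y * (β * (s - zb x y - h t x y / 2) + Kv) := by
      funext s
      rw [hv, ← hSv, ← hCv, ← hKv]
    rw [he]
    exact hcv (((((hid z).sub_const (zb x y)).sub_const (h t x y / 2)).const_mul β).add
      (hasDerivAt_const z Kv) |>.const_mul y) (by ring)
  have Hwz : ∀ z : ℝ, HasDerivAt (fun s => w t x y s)
      ((-2) * (β * (z - zbv) - β * hv1 / 2 + Kv) + Rv * (α * β + β * hRR)) z := by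
    intro z
    have he : (fun s => w t x y s) = fun s => ((-2) * (β * ((s - zbv) ^ 2 / 2 - hv1 / 2 * (s - zbv)) + Kv * (s - zbv)) + Rv * (α * (β * (s - zbv - hv1 / 2) + Kv) + β * hRR * (s - zbv))) := funext hwcf
    rw [he]
    have hsz : HasDerivAt (fun s : ℝ => s - zbv) 1 z := (hid z).sub_const zbv
    refine hcv (((((hsz.pow 2).div_const 2).sub (hsz.const_mul (hv1 / 2))).const_mul β |>.add
        (hsz.const_mul Kv) |>.const_mul (-2)).add
      ((((hsz.sub_const (hv1 / 2)).const_mul β).add_const Kv).const_mul α |>.add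
        (hsz.const_mul (β * hRR)) |>.const_mul Rv)) ?_
    push_cast
    ring
  have Hzbx : HasDerivAt (fun s => zb s y) (α * x) x := by
    have he : (fun s => zb s y) = fun s => α * (s ^ 2 + y ^ 2) / 2 := by
      funext s
      rw [hzb]
    rw [he]
    exact Ha1
  have Hzby : HasDerivAt (fun s => zb x s) (α * y) y := by
    have he : (fun s => zb x s) = fun s => α * (x ^ 2 + s ^ 2) / 2 := by
      funext s
      rw [hzb]
    rw [he]
    exact Ha2
  have Hhzbx : HasDerivAt (fun s => h t s y + zb s y) (2 * x * hRR + α * x) x := Hhx.add Hzbx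
  have Hhzby : HasDerivAt (fun s => h t x s + zb x s) (2 * y * hRR + α * y) y := Hhy.add Hzby


  -- key scalar identity
  have KEY : (Kv - β * hv1 / 2) ^ 2 - β * Rv * hRR * (Kv - β * hv1 / 2) + (Kd - β * hT1 / 2)
      + g * (2 * hRR + α) = 0 := by
    rw [hKv, hKd, hhv1, hhRR, hhT1, hfd, hfz, hZv, hDv]
    exact keylem g α β γ c ω Rv Cv Sv qv hβne hRne hD2ne h1γne hqne
      (by rw [hq2, hZv, hDv]) hS2 hω2
  rw [hRv] at KEY
  have KEY2 : hT1 + 2 * Kv * (Rv * hRR + hv1) = 0 := by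
    rw [hhT1, hKv, hhRR, hhv1, hDv]
    exact keylem2 β γ ω Rv Sv Cv fd fz hRne hD2ne h1γne
  rw [hRv] at KEY2


  refine ⟨fun z hz1 hz2 => ⟨?_, ?_, ?_⟩, ?_, ?_⟩
  · -- incompressibility
    rw [(Hux z).deriv]
    rw [(Hvy z).deriv]
    rw [(Hwz z).deriv]
    rw [hRv]
    ring
  · -- x momentum
    rw [(Hut z).deriv]
    rw [(Hux z).deriv]
    rw [(Huy z).deriv]
    rw [(Huz z).deriv]
    rw [Hhzbx.deriv]
    rw [hUval z]
    rw [hVval z]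
    rw [hwcf z]
    rw [hRv]
    linear_combination x * KEY
  · -- y momentum
    rw [(Hvt z).deriv]
    rw [(Hvx z).deriv]
    rw [(Hvy z).deriv]
    rw [(Hvz z).deriv]
    rw [Hhzby.deriv]
    rw [hUval z]
    rw [hVval z]
    rw [hwcf z]
    rw [hRv]
    linear_combination y * KEY
  · -- kinematic free-surface condition
    rw [(Hht.add_const (zb x y)).deriv]
    rw [Hhzbx.deriv]
    rw [Hhzby.deriv]
    rw [hUval _]
    rw [hVval _]
    rw [hwcf _]
    rw [hzb]
    rw [hH]
    rw [← hRv]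
    rw [← hzbv]
    rw [hRv]
    linear_combination KEY2
  · -- bottom impermeability
    rw [Hzbx.deriv]
    rw [Hzby.deriv]
    rw [hUval _]
    rw [hVval _]
    rw [hwcf _]
    rw [hzb]
    rw [← hRv]
    rw [← hzbv]
    rw [hRv]
    ring
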